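/- Fix β₁ < 0 with c₁ := e^{β₁}/(1+e^{β₁}) < c₂ := 1 + 1/(2β₁). For each β₂ > 0 let ℓ(u) = β₁u + β₂u³ - I(u) on [0,1]. Then every maximizer u of ℓ on [0,1] satisfies u < c₁ or u > c₂. -/

import Mathlib

set_option maxHeartbeats 1000000

noncomputable def Ient (u : ℝ) : ℝ :=
  (1 / 2) * u * Real.log u + (1 / 2) * (1 - u) * Real.log (1 - u)

open Set

lemma hasDerivAt_Ient {t : ℝ} (h0 : 0 < t) (h1 : t < 1) :
    HasDerivAt Ient ((1/2) * Real.log t - (1/2) * Real.log (1 - t)) t := by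
  have ha := Real.hasDerivAt_mul_log (ne_of_gt h0)
  have hc : HasDerivAt (fun u : ℝ => 1 - u) (-1) t := (hasDerivAt_id t).const_sub 1
  have hb : HasDerivAt (fun u : ℝ => (1-u) * Real.log (1-u))
      ((Real.log (1-t) + 1) * (-1)) t :=
    (Real.hasDerivAt_mul_log (by linarith : (1:ℝ) - t ≠ 0)).comp t hc
  have h := (ha.const_mul (1/2 : ℝ)).add (hb.const_mul (1/2 : ℝ))
  have heq : Ient
      = (fun x : ℝ => 1 / 2 * (x * Real.log x) + 1 / 2 * ((1 - x) * Real.log (1 - x))) := by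
    funext x; unfold Ient; ring
  rw [heq]
  refine h.congr_deriv ?_
  ring

lemma hasDerivAt_L (β₁ β₂ : ℝ) {t : ℝ} (h0 : 0 < t) (h1 : t < 1) :
    HasDerivAt (fun v : ℝ => β₁ * v + β₂ * v ^ 3 - Ient v)
      (β₁ + 3*β₂*t^2 - ((1/2) * Real.log t - (1/2) * Real.log (1 - t))) t := by
  have h1' : HasDerivAt (fun v : ℝ => β₁ * v) β₁ t := by
    simpa using (hasDerivAt_id t).const_mul β₁
  have h2' : HasDerivAt (fun v : ℝ => β₂ * v ^ 3) (β₂ * (3 * t ^ 2)) t := by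
    simpa using (hasDerivAt_pow 3 t).const_mul β₂
  have := (h1'.add h2').sub (hasDerivAt_Ient h0 h1)
  refine this.congr_deriv ?_
  ring

lemma hasDerivAt_N (β₁ : ℝ) {t : ℝ} (h0 : 0 < t) (h1 : t < 1) :
    HasDerivAt (fun s : ℝ => Real.log s - Real.log (1-s) - 1/(2*(1-s)) - 2*β₁)
      (1/t + 1/(1-t) - 1/(2*(1-t)^2)) t := by
  have hlt : HasDerivAt Real.log (1/t) t := by
    simpa [one_div] using Real.hasDerivAt_log (ne_of_gt h0)
  have hc : HasDerivAt (fun s : ℝ => 1 - s) (-1) t := (hasDerivAt_id t).const_sub 1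
  have hl2 : HasDerivAt (fun s : ℝ => Real.log (1-s)) ((1/(1-t)) * (-1)) t := by
    have := (Real.hasDerivAt_log (by linarith : (1:ℝ) - t ≠ 0)).comp t hc
    rw [one_div]; exact this
  have hd : HasDerivAt (fun s : ℝ => 2*(1-s)) (-2) t := by
    simpa using hc.const_mul (2:ℝ)
  have hinv : HasDerivAt (fun s : ℝ => 1/(2*(1-s))) (-(-2) / (2*(1-t))^2) t := by
    simp only [one_div]; exact hd.inv (by intro h; nlinarith : 2*(1-t) ≠ 0)
  have h := ((hlt.sub hl2).sub hinv).sub_const (2*β₁)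
  refine h.congr_deriv ?_
  have h1t : (1:ℝ) - t ≠ 0 := by linarith
  field_simp
  ring

lemma hasDerivAt_q (β₁ : ℝ) {t : ℝ} (h0 : 0 < t) (h1 : t < 1) :
    HasDerivAt (fun s : ℝ => ((1/2)*(Real.log s - Real.log (1-s)) - β₁)/(3*s^2))
      ((((1/2)*(1/t + 1/(1-t))) * (3*t^2) - ((1/2)*(Real.log t - Real.log (1-t)) - β₁)*(6*t))
        / (3*t^2)^2) t := by
  have hlt : HasDerivAt Real.log (1/t) t := by
    simpa [one_div] using Real.hasDerivAt_log (ne_of_gt h0)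
  have hc : HasDerivAt (fun s : ℝ => 1 - s) (-1) t := (hasDerivAt_id t).const_sub 1
  have hl2 : HasDerivAt (fun s : ℝ => Real.log (1-s)) ((1/(1-t)) * (-1)) t := by
    have := (Real.hasDerivAt_log (by linarith : (1:ℝ) - t ≠ 0)).comp t hc
    rw [one_div]; exact this
  have hnum : HasDerivAt (fun s : ℝ => (1/2)*(Real.log s - Real.log (1-s)) - β₁)
      ((1/2)*(1/t + 1/(1-t))) t := by
    have := ((hlt.sub hl2).const_mul (1/2 : ℝ)).sub_const β₁
    refine this.congr_deriv ?_
    ring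
  have hden : HasDerivAt (fun s : ℝ => 3*s^2) (6*t) t := by
    have := (hasDerivAt_pow 2 t).const_mul (3:ℝ)
    refine this.congr_deriv ?_
    ring
  exact hnum.div hden (by positivity)

theorem maximizer_dichotomy (β₁ β₂ : ℝ) (hβ₁ : β₁ < 0) (hβ₂ : 0 < β₂)
    (c₁ c₂ : ℝ) (hc₁ : c₁ = Real.exp β₁ / (1 + Real.exp β₁)) (hc₂ : c₂ = 1 + 1 / (2 * β₁))
    (hcc : c₁ < c₂)
    (u : ℝ) (hu : u ∈ Set.Icc (0 : ℝ) 1)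
    (hmax : ∀ v ∈ Set.Icc (0 : ℝ) 1,
      β₁ * v + β₂ * v ^ 3 - Ient v ≤ β₁ * u + β₂ * u ^ 3 - Ient u) :
    u < c₁ ∨ u > c₂ := by
  by_contra hcon
  push_neg at hcon
  obtain ⟨hc1u, huc2⟩ := hcon
  have hEpos : 0 < Real.exp β₁ := Real.exp_pos β₁
  have hE1 : Real.exp β₁ < 1 := by
    rw [← Real.exp_zero]; exact Real.exp_lt_exp.mpr hβ₁
  have hc10 : 0 < c₁ := by rw [hc₁]; positivity
  have hc1half : c₁ < 1/2 := by
    rw [hc₁, div_lt_iff₀ (by positivity)]; linarith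
  have hc21 : c₂ < 1 := by
    rw [hc₂]
    have h2b : 2*β₁ < 0 := by linarith
    have : 1/(2*β₁) < 0 := div_neg_of_pos_of_neg one_pos h2b
    linarith
  have hu0 : 0 < u := lt_of_lt_of_le hc10 hc1u
  have hu1 : u < 1 := lt_of_le_of_lt huc2 hc21
  have h1c1pos : 0 < 1 - c₁ := by linarith
  have hlogit1 : Real.log c₁ - Real.log (1 - c₁) = β₁ := by
    rw [← Real.log_div hc10.ne' (by linarith)]
    have hq : c₁ / (1 - c₁) = Real.exp β₁ := by
      rw [hc₁]
      field_simp
      ring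
    rw [hq, Real.log_exp]
  have hb0 : β₁ ≠ 0 := ne_of_lt hβ₁
  have hkey1 : 2*β₁*c₂ = 2*β₁ + 1 := by
    rw [hc₂]; field_simp
  -- first order condition
  have hL := hasDerivAt_L β₁ β₂ hu0 hu1
  have hloc : IsLocalMax (fun v : ℝ => β₁ * v + β₂ * v ^ 3 - Ient v) u := by
    filter_upwards [Ioo_mem_nhds hu0 hu1] with v hv
    exact hmax v ⟨hv.1.le, hv.2.le⟩
  have hfo : β₁ + 3*β₂*u^2 - ((1/2) * Real.log u - (1/2) * Real.log (1 - u)) = 0 :=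
    hloc.hasDerivAt_eq_zero hL
  have hqu : ((1/2)*(Real.log u - Real.log (1-u)) - β₁)/(3*u^2) = β₂ := by
    rw [div_eq_iff (by positivity : (3:ℝ)*u^2 ≠ 0)]
    linear_combination -hfo
  -- N positivity at endpoints
  have hinv1 : 1/(2*(1-c₁)) < -β₁ := by
    rw [div_lt_iff₀ (by linarith : (0:ℝ) < 2*(1-c₁))]
    nlinarith [mul_pos (by linarith : (0:ℝ) < -(2*β₁)) (by linarith : (0:ℝ) < c₂ - c₁)]
  have hN1 : 0 < Real.log c₁ - Real.log (1-c₁) - 1/(2*(1-c₁)) - 2*β₁ := by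
    rw [hlogit1]; linarith
  have hinv2 : 1/(2*(1-c₂)) = -β₁ := by
    have h1c2 : 1 - c₂ = -(1/(2*β₁)) := by rw [hc₂]; ring
    rw [h1c2]; field_simp
  have hN2 : 0 < Real.log c₂ - Real.log (1-c₂) - 1/(2*(1-c₂)) - 2*β₁ := by
    have hl1 : Real.log c₁ < Real.log c₂ := Real.log_lt_log hc10 hcc
    have hl2 : Real.log (1-c₂) < Real.log (1-c₁) :=
      Real.log_lt_log (by linarith) (by linarith)
    rw [hinv2]
    linarith [hlogit1]
  -- N positivity on the open interval
  have hNpos : ∀ t ∈ Ioo c₁ c₂, 0 < Real.log t - Real.log (1-t) - 1/(2*(1-t)) - 2*β₁ := by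
    intro t ht
    have ht0 : 0 < t := lt_trans hc10 ht.1
    have ht1 : t < 1 := lt_trans ht.2 hc21
    rcases le_or_gt t (2/3) with h23 | h23
    · have hmono : StrictMonoOn
          (fun s : ℝ => Real.log s - Real.log (1-s) - 1/(2*(1-s)) - 2*β₁) (Icc c₁ (2/3)) := by
        apply strictMonoOn_of_deriv_pos (convex_Icc _ _)
        · intro s hs
          exact (hasDerivAt_N β₁ (lt_of_lt_of_le hc10 hs.1)
            (by linarith [hs.2])).continuousAt.continuousWithinAt
        · intro s hs
          rw [interior_Icc] at hs
          have hs0 : 0 < s := lt_trans hc10 hs.1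
          have hs1 : s < 1 := by linarith [hs.2]
          rw [(hasDerivAt_N β₁ hs0 hs1).deriv]
          have h1s : (0:ℝ) < 1 - s := by linarith
          have heq : 1/s + 1/(1-s) - 1/(2*(1-s)^2) = (2-3*s)/(2*s*(1-s)^2) := by
            field_simp
            ring
          rw [heq]
          exact div_pos (by linarith [hs.2]) (by positivity)
      have := hmono ⟨le_refl c₁, by linarith⟩ ⟨ht.1.le, h23⟩ ht.1
      simp only [] at this
      linarith
    · have hanti : StrictAntiOn
          (fun s : ℝ => Real.log s - Real.log (1-s) - 1/(2*(1-s)) - 2*β₁) (Icc (2/3) c₂) := by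
        apply strictAntiOn_of_deriv_neg (convex_Icc _ _)
        · intro s hs
          exact (hasDerivAt_N β₁ (by linarith [hs.1])
            (lt_of_le_of_lt hs.2 hc21)).continuousAt.continuousWithinAt
        · intro s hs
          rw [interior_Icc] at hs
          have hs0 : 0 < s := by linarith [hs.1]
          have hs1 : s < 1 := by linarith [hs.2, hc21]
          rw [(hasDerivAt_N β₁ hs0 hs1).deriv]
          have h1s : (0:ℝ) < 1 - s := by linarith
          have heq : 1/s + 1/(1-s) - 1/(2*(1-s)^2) = (2-3*s)/(2*s*(1-s)^2) := by
            field_simp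
            ring
          rw [heq]
          exact div_neg_of_neg_of_pos (by linarith [hs.1]) (by positivity)
      have := hanti ⟨h23.le, ht.2.le⟩ ⟨by linarith [ht.2], le_refl c₂⟩ ht.2
      simp only [] at this
      linarith
  -- q is strictly antitone on [c₁, c₂]
  have hqanti : StrictAntiOn
      (fun s : ℝ => ((1/2)*(Real.log s - Real.log (1-s)) - β₁)/(3*s^2)) (Icc c₁ c₂) := by
    apply strictAntiOn_of_deriv_neg (convex_Icc _ _)
    · intro s hs
      exact (hasDerivAt_q β₁ (lt_of_lt_of_le hc10 hs.1)
        (lt_of_le_of_lt hs.2 hc21)).continuousAt.continuousWithinAt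
    · intro s hs
      rw [interior_Icc] at hs
      have hs0 : 0 < s := lt_trans hc10 hs.1
      have hs1 : s < 1 := lt_trans hs.2 hc21
      rw [(hasDerivAt_q β₁ hs0 hs1).deriv]
      have hN := hNpos s hs
      apply div_neg_of_neg_of_pos _ (by positivity)
      have h1s : (0:ℝ) < 1 - s := by linarith
      have heq2 : ((1/2)*(1/s + 1/(1-s))) * (3*s^2)
          - ((1/2)*(Real.log s - Real.log (1-s)) - β₁)*(6*s)
          = -(3*s) * (Real.log s - Real.log (1-s) - 1/(2*(1-s)) - 2*β₁) := by
        field_simp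
        ring
      rw [heq2]
      exact mul_neg_of_neg_of_pos (by linarith) hN
  -- compare L at u with an endpoint
  have hmem_u : u ∈ Icc c₁ c₂ := ⟨hc1u, huc2⟩
  rcases eq_or_lt_of_le huc2 with hEq | hlt
  · -- u = c₂, compare with c₁
    have hc1ltu : c₁ < u := by rw [hEq]; exact hcc
    have hantiL : StrictAntiOn (fun v : ℝ => β₁ * v + β₂ * v ^ 3 - Ient v) (Icc c₁ u) := by
      apply strictAntiOn_of_deriv_neg (convex_Icc _ _)
      · intro s hs
        exact (hasDerivAt_L β₁ β₂ (lt_of_lt_of_le hc10 hs.1)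
          (lt_of_le_of_lt hs.2 hu1)).continuousAt.continuousWithinAt
      · intro s hs
        rw [interior_Icc] at hs
        have hs0 : 0 < s := lt_trans hc10 hs.1
        have hs1 : s < 1 := lt_trans hs.2 hu1
        rw [(hasDerivAt_L β₁ β₂ hs0 hs1).deriv]
        have hqs := hqanti ⟨hs.1.le, by linarith [hs.2]⟩ hmem_u hs.2
        simp only [] at hqs
        rw [hqu] at hqs
        have h2 : β₂ * (3*s^2) < ((1/2)*(Real.log s - Real.log (1-s)) - β₁) := by
          have := (lt_div_iff₀ (by positivity : (0:ℝ) < 3*s^2)).mp hqs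
          linarith
        nlinarith [h2]
    have hL1 : β₁ * u + β₂ * u ^ 3 - Ient u < β₁ * c₁ + β₂ * c₁ ^ 3 - Ient c₁ := by
      exact hantiL ⟨le_refl c₁, hc1ltu.le⟩ ⟨hc1ltu.le, le_refl u⟩ hc1ltu
    exact absurd (hmax c₁ ⟨hc10.le, by linarith⟩) (by linarith)
  · -- u < c₂, compare with c₂
    have hmonoL : StrictMonoOn (fun v : ℝ => β₁ * v + β₂ * v ^ 3 - Ient v) (Icc u c₂) := by
      apply strictMonoOn_of_deriv_pos (convex_Icc _ _)
      · intro s hs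
        exact (hasDerivAt_L β₁ β₂ (lt_of_lt_of_le hu0 hs.1)
          (lt_of_le_of_lt hs.2 hc21)).continuousAt.continuousWithinAt
      · intro s hs
        rw [interior_Icc] at hs
        have hs0 : 0 < s := lt_trans hu0 hs.1
        have hs1 : s < 1 := lt_trans hs.2 hc21
        rw [(hasDerivAt_L β₁ β₂ hs0 hs1).deriv]
        have hqs := hqanti hmem_u ⟨by linarith [hs.1], hs.2.le⟩ hs.1
        simp only [] at hqs
        rw [hqu] at hqs
        have h2 : ((1/2)*(Real.log s - Real.log (1-s)) - β₁) < β₂ * (3*s^2) := by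
          have := (div_lt_iff₀ (by positivity : (0:ℝ) < 3*s^2)).mp hqs
          linarith
        nlinarith [h2]
    have hL2 : β₁ * u + β₂ * u ^ 3 - Ient u < β₁ * c₂ + β₂ * c₂ ^ 3 - Ient c₂ := by
      exact hmonoL ⟨le_refl u, hlt.le⟩ ⟨hlt.le, le_refl c₂⟩ hlt
    exact absurd (hmax c₂ ⟨by linarith, hc21.le⟩) (by linarith)
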